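/- Every Lie algebra with a codimension-one abelian ideal h, such that ad(Y)|_h is not a multiple of the identity for Y ∉ h, admits an inner product having a basis of geodesic elements. -/

import Mathlib

open Module Submodule


theorem aux_weighted_form {V : Type*} [AddCommGroup V] [Module ℝ V] {ι : Type*} [Fintype ι]
    (b : Basis ι ℝ V) (wt : ι → ℝ) (hwt : ∀ i, 0 < wt i) :
    ∃ B : V →ₗ[ℝ] V →ₗ[ℝ] ℝ,
      (∀ x y, B x y = B y x) ∧ (∀ x, x ≠ 0 → 0 < B x x) ∧
      ∀ x y, B x y = ∑ i, wt i * (b.repr x i * b.repr y i) := by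
  refine ⟨∑ i : ι, wt i • (LinearMap.smulRight (b.coord i) (b.coord i)), ?_, ?_, ?_⟩
  rotate_right
  · intro x y
    simp [LinearMap.sum_apply, LinearMap.smulRight_apply, Basis.coord_apply, smul_eq_mul,
      mul_assoc, mul_comm, mul_left_comm]
  · intro x y
    simp [LinearMap.sum_apply, LinearMap.smulRight_apply, Basis.coord_apply, smul_eq_mul]
    exact Finset.sum_congr rfl fun i _ => by ring
  · intro x hx
    have hdef : ∀ y z : V,
        ((∑ i : ι, wt i • (LinearMap.smulRight (b.coord i) (b.coord i))) y) z
          = ∑ i, wt i * (b.repr y i * b.repr z i) := by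
      intro y z
      simp [LinearMap.sum_apply, LinearMap.smulRight_apply, Basis.coord_apply, smul_eq_mul,
        mul_assoc]
    rw [hdef]
    have hrepr : b.repr x ≠ 0 := by
      intro h
      exact hx (by simpa using congrArg b.repr.symm h)
    obtain ⟨i, hi⟩ := Finsupp.ne_iff.mp hrepr
    apply Finset.sum_pos'
    · intro k _
      exact mul_nonneg (hwt k).le (mul_self_nonneg _)
    · exact ⟨i, Finset.mem_univ i, mul_pos (hwt i) (mul_self_pos.mpr (by simpa using hi))⟩

theorem aux_forall_eigen {V : Type*} [AddCommGroup V] [Module ℝ V] (A : V →ₗ[ℝ] V)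
    (h : ∀ v : V, ∃ c : ℝ, A v = c • v) {v₀ : V} (hv₀ : v₀ ≠ 0) :
    ∃ c : ℝ, ∀ v : V, A v = c • v := by
  obtain ⟨c₀, hc₀⟩ := h v₀
  refine ⟨c₀, fun v => ?_⟩
  by_cases hvsp : ∃ t : ℝ, v = t • v₀
  · obtain ⟨t, rfl⟩ := hvsp
    rw [map_smul, hc₀, smul_comm]
  · obtain ⟨c, hc⟩ := h v
    obtain ⟨d, hd⟩ := h (v₀ + v)
    have hv0 : v ≠ 0 := fun h0 => hvsp ⟨0, by simp [h0]⟩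
    have h1 : c₀ • v₀ + c • v = d • v₀ + d • v := by
      rw [← hc₀, ← hc, ← map_add, hd, smul_add]
    have h2 : (c₀ - d) • v₀ = (d - c) • v := by
      rw [sub_smul, sub_smul, sub_eq_sub_iff_add_eq_add, h1, add_comm]
    by_cases hdc : d = c₀
    · have h3 : (d - c) • v = 0 := by rw [← h2, hdc, sub_self, zero_smul]
      have h4 : d = c := by
        rcases smul_eq_zero.mp h3 with h5 | h5
        · linarith [sub_eq_zero.mp (by exact_mod_cast h5)]
        · exact absurd h5 hv0
      rw [hc, ← h4, hdc]
    · exfalso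
      have hne : c₀ - d ≠ 0 := fun h5 => hdc (by linarith [sub_eq_zero.mp h5])
      have h6 : v₀ = ((c₀ - d)⁻¹ * (d - c)) • v := by
        rw [mul_smul, ← h2, ← mul_smul, inv_mul_cancel₀ hne, one_smul]
      by_cases hs : (c₀ - d)⁻¹ * (d - c) = 0
      · exact hv₀ (by rw [h6, hs, zero_smul])
      · exact hvsp ⟨((c₀ - d)⁻¹ * (d - c))⁻¹, by rw [h6, ← mul_smul, inv_mul_cancel₀ hs, one_smul]⟩

set_option maxHeartbeats 2000000 in
/-- A finite-dimensional real Lie algebra with a codimension-one abelian ideal `H`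
(complemented by `Y`), such that `ad Y` restricted to `H` is not a multiple of the
identity, admits an inner product having a basis of geodesic elements. -/
theorem geodesic_basis_codim_one_abelian_ideal
    {L : Type*} [LieRing L] [LieAlgebra ℝ L] [Module.Finite ℝ L]
    (Y : L) (H : LieIdeal ℝ L)
    (hY : Y ∉ H)
    (hspan : Submodule.span ℝ {Y} ⊔ H.toSubmodule = ⊤)
    (habel : ∀ a ∈ H, ∀ b ∈ H, ⁅a, b⁆ = (0 : L))
    (hnotid : ∀ c : ℝ, ∃ W ∈ H, ⁅Y, W⁆ ≠ c • W) :
    ∃ B : L →ₗ[ℝ] L →ₗ[ℝ] ℝ,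
      (∀ x y, B x y = B y x) ∧ (∀ x, x ≠ 0 → 0 < B x x) ∧
      ∃ b : Basis (Fin (Module.finrank ℝ L)) ℝ L,
        ∀ i, b i ≠ 0 ∧ ∀ W, B (b i) ⁅b i, W⁆ = 0 := by
  classical
  set M : Submodule ℝ L := H.toSubmodule with hM
  have hmemM : ∀ x : L, x ∈ M ↔ x ∈ H := fun x => Iff.rfl
  have hY0 : Y ≠ 0 := fun h => hY (h ▸ H.zero_mem)
  -- the restricted adjoint map
  have hAd : ∀ x ∈ M, (LieAlgebra.ad ℝ L Y) x ∈ M := by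
    intro x hx
    exact (hmemM _).mpr (by simpa [LieAlgebra.ad_apply] using H.lie_mem ((hmemM x).mp hx))
  set A : ↥M →ₗ[ℝ] ↥M := (LieAlgebra.ad ℝ L Y).restrict hAd with hA
  have hAcoe : ∀ m : ↥M, ((A m : ↥M) : L) = ⁅Y, (m : L)⁆ := by
    intro m
    rw [hA, LinearMap.restrict_coe_apply, LieAlgebra.ad_apply]
  -- a vector that is not an eigenvector
  have hexv : ∃ v : ↥M, ∀ c : ℝ, A v ≠ c • v := by
    by_contra hcon
    push_neg at hcon
    obtain ⟨W0, hW0H, hW0⟩ := hnotid 0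
    have hW0ne : (⟨W0, (hmemM W0).mpr hW0H⟩ : ↥M) ≠ 0 := by
      intro h0
      apply hW0
      have : W0 = 0 := congrArg Subtype.val h0
      simp [this]
    obtain ⟨c, hcall⟩ := aux_forall_eigen A hcon hW0ne
    obtain ⟨W, hWH, hWne⟩ := hnotid c
    apply hWne
    have h1 := hcall ⟨W, (hmemM W).mpr hWH⟩
    have h2 := congrArg Subtype.val h1
    rw [hAcoe] at h2
    exact h2
  obtain ⟨v, hv⟩ := hexv
  set wv : ↥M := A v with hwv
  have hv0 : v ≠ 0 := by
    intro h0
    exact hv 0 (by rw [hwv, h0, map_zero, zero_smul])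
  have hvwv : v ≠ wv := by
    intro h0
    exact hv 1 (by rw [one_smul]; exact h0.symm)
  -- basis of M extending {v, wv}
  have hli : LinearIndepOn ℝ id ({v, wv} : Set ↥M) := by
    apply linearIndepOn_id_pair hv0
    intro a ha
    exact hv a ha.symm
  set bM : Basis _ ℝ ↥M := Basis.extend hli with hbM
  haveI : Fintype ↥(hli.extend (Set.subset_univ _)) := FiniteDimensional.fintypeBasisIndex bM
  set iv : ↥(hli.extend (Set.subset_univ _)) :=
    ⟨v, hli.subset_extend _ (Set.mem_insert _ _)⟩ with hiv
  set iw : ↥(hli.extend (Set.subset_univ _)) :=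
    ⟨wv, hli.subset_extend _ (Set.mem_insert_of_mem _ rfl)⟩ with hiw
  have hbMiv : bM iv = v := Basis.extend_apply_self hli iv
  have hbMiw : bM iw = wv := Basis.extend_apply_self hli iw
  have hivw : iv ≠ iw := fun h => hvwv (congrArg Subtype.val h)
  -- basis of L
  have hcompl : IsCompl (Submodule.span ℝ {Y}) M := by
    constructor
    · rw [disjoint_comm]
      rw [Submodule.disjoint_span_singleton]
      intro hYM
      exact absurd ((hmemM Y).mp hYM) hY
    · exact codisjoint_iff.mpr hspan
  set FB : Unit ⊕ ↥(hli.extend (Set.subset_univ _)) → L :=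
    Sum.elim (fun _ => Y) (fun j => (bM j : L)) with hFB
  have hMle : ∀ S : Submodule ℝ L, (∀ j, (bM j : L) ∈ S) → M ≤ S := by
    intro S hS x hx
    have h1 : (⟨x, hx⟩ : ↥M) ∈ (⊤ : Submodule ℝ ↥M) := trivial
    rw [← bM.span_eq] at h1
    have h2 := Submodule.map_mono (le_of_eq rfl) (Submodule.mem_map_of_mem (f := M.subtype) h1)
    rw [Submodule.map_span] at h2
    refine Submodule.span_le.mpr ?_ h2
    rintro _ ⟨_, ⟨j, rfl⟩, rfl⟩
    exact hS j
  have hFBspan : ⊤ ≤ Submodule.span ℝ (Set.range FB) := by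
    rw [← hspan]
    apply sup_le
    · exact Submodule.span_mono (Set.singleton_subset_iff.mpr ⟨Sum.inl (), rfl⟩)
    · exact hMle _ fun j => Submodule.subset_span ⟨Sum.inr j, rfl⟩
  have hFBcard : Fintype.card (Unit ⊕ ↥(hli.extend (Set.subset_univ _))) = finrank ℝ L := by
    rw [Fintype.card_sum, Fintype.card_unit]
    rw [← Submodule.finrank_add_eq_of_isCompl hcompl]
    rw [finrank_span_singleton hY0]
    rw [finrank_eq_card_basis bM]
  set bL : Basis _ ℝ L := basisOfTopLeSpanOfCardEqFinrank FB hFBspan hFBcard with hbL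
  have hbLc : ⇑bL = FB := coe_basisOfTopLeSpanOfCardEqFinrank FB hFBspan hFBcard
  have hvL : (v : L) = bL (Sum.inr iv) := by rw [hbLc]; exact (congrArg _ hbMiv).symm
  have hwL : (wv : L) = bL (Sum.inr iw) := by rw [hbLc]; exact (congrArg _ hbMiw).symm
  have hYL : Y = bL (Sum.inl ()) := by rw [hbLc]; rfl
  -- the weight and the form
  set a : ℝ := bL.repr ((A wv : ↥M) : L) (Sum.inr iv) with ha
  set wt : Unit ⊕ ↥(hli.extend (Set.subset_univ _)) → ℝ :=
    fun i => if i = Sum.inr iw then 1 + |a| else 1 with hwt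
  have hwtpos : ∀ i, 0 < wt i := by
    intro i
    rw [hwt]
    dsimp only
    split
    · linarith [abs_nonneg a]
    · exact one_pos
  obtain ⟨B, hsym, hpos, hBdef⟩ := aux_weighted_form bL wt hwtpos
  have hBcoord : ∀ i z, B (bL i) z = wt i * bL.repr z i := by
    intro i z
    rw [hBdef, Basis.repr_self]
    rw [Finset.sum_eq_single i]
    · simp
    · intro k _ hk
      simp [Finsupp.single_apply, Ne.symm hk]
    · intro h
      exact absurd (Finset.mem_univ i) h
  have hreprM : ∀ m : ↥M, bL.repr (m : L) (Sum.inl ()) = 0 := by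
    intro m
    have h1 : (m : L) = ∑ j, bM.repr m j • bL (Sum.inr j) := by
      conv_lhs => rw [← bM.sum_repr m]
      rw [hbLc]
      push_cast
      rfl
    rw [h1, map_sum]
    rw [Finsupp.coe_finset_sum, Finset.sum_apply]
    apply Finset.sum_eq_zero
    intro j _
    rw [map_smul, Basis.repr_self]
    simp [Finsupp.single_apply]
  -- key values of B
  have hwtv : wt (Sum.inr iv) = 1 := by
    rw [hwt]
    dsimp only
    rw [if_neg]
    intro h
    exact hivw (Sum.inr.inj h)
  have hwtw : wt (Sum.inr iw) = 1 + |a| := by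
    rw [hwt]
    dsimp only
    rw [if_pos rfl]
  have hqv : B (v : L) (wv : L) = 0 := by
    rw [hvL, hwL, hBcoord, Basis.repr_self, Finsupp.single_apply,
      if_neg (fun h => hivw (Sum.inr.inj h).symm), mul_zero]
  set ψ : ↥M →ₗ[ℝ] ℝ :=
    ((B (v : L)).comp (M.subtype.comp A)) + ((B.flip (wv : L)).comp M.subtype) with hψdef
  have hψ : ∀ m : ↥M, ψ m = B (v : L) ((A m : ↥M) : L) + B (m : L) (wv : L) := by
    intro m
    rw [hψdef]
    simp [LinearMap.add_apply, LinearMap.comp_apply, LinearMap.flip_apply]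
  have hψv : ψ v = 0 := by
    rw [hψ, ← hwv, hqv, add_zero]
  have hψwv : ψ wv = a + (1 + |a|) := by
    rw [hψ, hvL, hBcoord, hwtv, ← ha, hwL, hBcoord, hwtw, Basis.repr_self,
      Finsupp.single_apply, if_pos rfl]
    ring
  have hψwvpos : 0 < ψ wv := by
    rw [hψwv]
    linarith [neg_abs_le a]
  have hBY : ∀ m : ↥M, B Y (m : L) = 0 := by
    intro m
    rw [hYL, hBcoord, hreprM, mul_zero]
  set qq : ↥M → ℝ := fun m => B (m : L) ((A m : ↥M) : L) with hqq
  have hqv' : qq v = 0 := by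
    rw [hqq]
    dsimp only
    rw [← hwv]
    exact hqv
  have hqexp : ∀ (f : ↥M) (s : ℝ), qq (f + s • v) = qq f + s * ψ f := by
    intro f s
    rw [hqq]
    dsimp only
    have hA2 : A (f + s • v) = A f + s • wv := by rw [map_add, map_smul, ← hwv]
    rw [hA2]
    have e1 : ((f + s • v : ↥M) : L) = (f : L) + s • (v : L) := by push_cast; ring
    have e2 : ((A f + s • wv : ↥M) : L) = ((A f : ↥M) : L) + s • (wv : L) := by push_cast; ring
    rw [e1, e2]
    simp only [map_add, map_smul, LinearMap.add_apply, LinearMap.smul_apply, smul_eq_mul]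
    rw [hψ, hqv]
    ring
  -- the kernel of ψ and geodesic vectors
  set K : Submodule ℝ ↥M := LinearMap.ker ψ with hK
  set w₁ : ↥M := (ψ wv)⁻¹ • wv with hw₁
  have hψw₁ : ψ w₁ = 1 := by
    rw [hw₁, map_smul, smul_eq_mul, inv_mul_cancel₀ (ne_of_gt hψwvpos)]
  set G : ↥K → ↥M := fun k => w₁ + (k : ↥M) - qq (w₁ + (k : ↥M)) • v with hG
  have hqG : ∀ k : ↥K, qq (G k) = 0 := by
    intro k
    have hks : ψ (k : ↥M) = 0 := LinearMap.mem_ker.mp k.2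
    rw [hG]
    dsimp only
    rw [sub_eq_add_neg, ← neg_smul, hqexp, map_add, hψw₁, hks]
    ring
  have hvK : v ∈ K := LinearMap.mem_ker.mpr hψv
  set vK : ↥K := ⟨v, hvK⟩ with hvKdef
  have hvK0 : vK ≠ 0 := fun h => hv0 (congrArg Subtype.val h)
  obtain ⟨C, hC⟩ := Submodule.exists_isCompl (Submodule.span ℝ {vK})
  haveI : Module.Free ℝ ↥C := Module.Free.of_basis (Basis.ofVectorSpace ℝ ↥C)
  set bC : Basis (Fin (finrank ℝ ↥C)) ℝ ↥C := finBasis ℝ ↥C with hbC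
  set F : Fin 3 ⊕ Fin (finrank ℝ ↥C) → L :=
    Sum.elim ![Y, (v : L), ((G 0 : ↥M) : L)] (fun j => ((G (bC j) : ↥M) : L)) with hF
  -- cardinality
  have hcard : Fintype.card (Fin 3 ⊕ Fin (finrank ℝ ↥C)) = finrank ℝ L := by
    have r1 := Submodule.finrank_add_eq_of_isCompl hcompl
    have r2 := LinearMap.finrank_range_add_finrank_ker ψ
    have r3 : LinearMap.range ψ = ⊤ := by
      rw [LinearMap.range_eq_top]
      intro r
      exact ⟨(r * (ψ wv)⁻¹) • wv, by rw [map_smul, smul_eq_mul]; field_simp⟩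
    have r4 := Submodule.finrank_add_eq_of_isCompl hC
    rw [r3, finrank_top, finrank_self] at r2
    rw [← hK] at r2
    rw [finrank_span_singleton hY0] at r1
    rw [finrank_span_singleton hvK0] at r4
    simp only [Fintype.card_sum, Fintype.card_fin]
    omega
  -- spanning
  set S : Submodule ℝ L := Submodule.span ℝ (Set.range F) with hS
  have hYS : Y ∈ S := Submodule.subset_span ⟨Sum.inl 0, rfl⟩
  have hvS : (v : L) ∈ S := Submodule.subset_span ⟨Sum.inl 1, rfl⟩
  have hG0S : ((G 0 : ↥M) : L) ∈ S := Submodule.subset_span ⟨Sum.inl 2, rfl⟩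
  have hGcoe : ∀ k : ↥K, ((G k : ↥M) : L)
      = ((w₁ : ↥M) : L) + ((k : ↥M) : L) - qq (w₁ + (k : ↥M)) • (v : L) := by
    intro k
    rw [hG]
    dsimp only
    push_cast
    ring
  have hw₁S : ((w₁ : ↥M) : L) ∈ S := by
    rw [hGcoe 0] at hG0S
    have h1 := S.add_mem hG0S (S.smul_mem (qq (w₁ + ((0 : ↥K) : ↥M))) hvS)
    have h2 : ((w₁ : ↥M) : L) =
        (((w₁ : ↥M) : L) + (((0 : ↥K) : ↥M) : L) - qq (w₁ + ((0 : ↥K) : ↥M)) • (v : L))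
          + qq (w₁ + ((0 : ↥K) : ↥M)) • (v : L) := by
      push_cast
      module
    rw [h2]
    exact h1
  have hkmem : ∀ k : ↥K, ((G k : ↥M) : L) ∈ S → ((k : ↥M) : L) ∈ S := by
    intro k hk
    rw [hGcoe k] at hk
    have h1 := S.add_mem (S.sub_mem hk hw₁S) (S.smul_mem (qq (w₁ + (k : ↥M))) hvS)
    have h2 : ((k : ↥M) : L) =
        (((w₁ : ↥M) : L) + ((k : ↥M) : L) - qq (w₁ + (k : ↥M)) • (v : L) - ((w₁ : ↥M) : L))
          + qq (w₁ + (k : ↥M)) • (v : L) := by module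
    rw [h2]
    exact h1
  have hbCS : ∀ j, ((((bC j : ↥K)) : ↥M) : L) ∈ S := fun j =>
    hkmem _ (Submodule.subset_span ⟨Sum.inr j, rfl⟩)
  have hCS : ∀ c : ↥C, (((c : ↥K) : ↥M) : L) ∈ S := by
    intro c
    have hc : (((c : ↥K) : ↥M) : L)
        = ∑ j, bC.repr c j • ((((bC j : ↥K)) : ↥M) : L) := by
      conv_lhs => rw [← bC.sum_repr c]
      push_cast
      rfl
    rw [hc]
    exact Submodule.sum_mem _ fun j _ => S.smul_mem _ (hbCS j)
  have hKS : ∀ k : ↥K, ((k : ↥M) : L) ∈ S := by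
    intro k
    have hk : k ∈ Submodule.span ℝ {vK} ⊔ C := by
      rw [codisjoint_iff.mp hC.codisjoint]
      trivial
    obtain ⟨y, hy, z, hz, hyz⟩ := Submodule.mem_sup.mp hk
    obtain ⟨t, rfl⟩ := Submodule.mem_span_singleton.mp hy
    have hzS : ((z : ↥M) : L) ∈ S := hCS ⟨z, hz⟩
    have h2 : ((k : ↥M) : L) = t • (v : L) + ((z : ↥M) : L) := by
      rw [← hyz]
      push_cast
      rfl
    rw [h2]
    exact S.add_mem (S.smul_mem t hvS) hzS
  have hMS : ∀ m : ↥M, (m : L) ∈ S := by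
    intro m
    have hmem : m - ψ m • w₁ ∈ K := by
      rw [hK, LinearMap.mem_ker, map_sub, map_smul, hψw₁, smul_eq_mul, mul_one, sub_self]
    have h1 := hKS ⟨m - ψ m • w₁, hmem⟩
    have h2 : (m : L) = ((m - ψ m • w₁ : ↥M) : L) + ψ m • ((w₁ : ↥M) : L) := by
      push_cast
      module
    rw [h2]
    exact S.add_mem h1 (S.smul_mem _ hw₁S)
  have hFspan : ⊤ ≤ Submodule.span ℝ (Set.range F) := by
    rw [← hS, ← hspan]
    apply sup_le
    · exact Submodule.span_le.mpr (Set.singleton_subset_iff.mpr hYS)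
    · intro x hx
      exact hMS ⟨x, hx⟩
  -- geodesic properties
  have hdecomp : ∀ W : L, ∃ t : ℝ, ∃ k, k ∈ M ∧ W = t • Y + k := by
    intro W
    have h1 : W ∈ Submodule.span ℝ {Y} ⊔ M := by rw [hspan]; trivial
    obtain ⟨y, hy, k, hk, hyk⟩ := Submodule.mem_sup.mp h1
    obtain ⟨t, rfl⟩ := Submodule.mem_span_singleton.mp hy
    exact ⟨t, k, hk, hyk.symm⟩
  have hgeoY : ∀ W, B Y ⁅Y, W⁆ = 0 := by
    intro W
    obtain ⟨t, k, hk, rfl⟩ := hdecomp W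
    have h1 : ⁅Y, t • Y + k⁆ = ⁅Y, k⁆ := by simp
    have h2 : ⁅Y, k⁆ ∈ M := (hmemM _).mpr (H.lie_mem ((hmemM k).mp hk))
    rw [h1]
    exact hBY ⟨⁅Y, k⁆, h2⟩
  have hgeoM : ∀ m : ↥M, qq m = 0 → ∀ W, B (m : L) ⁅(m : L), W⁆ = 0 := by
    intro m hq W
    have hq' : B (m : L) ((A m : ↥M) : L) = 0 := by
      rw [hqq] at hq
      exact hq
    obtain ⟨t, k, hk, rfl⟩ := hdecomp W
    have h1 : ⁅(m : L), t • Y + k⁆ = -(t • ((A m : ↥M) : L)) := by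
      rw [lie_add, lie_smul]
      rw [habel (m : L) ((hmemM _).mp m.2) k ((hmemM k).mp hk)]
      rw [hAcoe, ← lie_skew (m : L) Y, smul_neg, add_zero]
    rw [h1, map_neg, map_smul, hq']
    simp
  -- assembling the basis
  have hqG0 : qq v = 0 := hqv'
  set b0 : Basis (Fin 3 ⊕ Fin (finrank ℝ ↥C)) ℝ L :=
    basisOfTopLeSpanOfCardEqFinrank F hFspan hcard with hb0
  have hb0c : ⇑b0 = F := coe_basisOfTopLeSpanOfCardEqFinrank F hFspan hcard
  set e : (Fin 3 ⊕ Fin (finrank ℝ ↥C)) ≃ Fin (finrank ℝ L) := Fintype.equivFinOfCardEq hcard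
    with he
  refine ⟨B, hsym, hpos, b0.reindex e, fun i => ⟨Basis.ne_zero _ _, ?_⟩⟩
  have hbi : (b0.reindex e) i = F (e.symm i) := by rw [Basis.reindex_apply, hb0c]
  rw [hbi]
  rcases e.symm i with j | j
  · fin_cases j
    · intro W
      exact hgeoY W
    · intro W
      exact hgeoM v hqv' W
    · intro W
      exact hgeoM (G 0) (hqG 0) W
  · intro W
    exact hgeoM (G (bC j)) (hqG (bC j)) W
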